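/- Fix n ≥ 3, and let G be a countably infinite simple graph that contains no clique of size n and has the extension property for Kₙ-free graphs: for all disjoint finite sets A, B of vertices such that A contains no clique of size n−1, there exists a vertex v ∉ A ∪ B adjacent to every vertex of A and to no vertex of B. (Such a graph is the generic Kₙ-free homogeneous graph.) Then its distinguishing number is 2: there exists a coloring c of the vertices with values in Bool such that the only automorphism g of G with c ∘ g = c is the identity, while G does have a nontrivial automorphism. -/

import Mathlib

open SimpleGraph

section HensonAux

variable {V : Type*} {G : SimpleGraph V} {n : ℕ}


/-- Extension property abbreviation. -/
def ExtP (G : SimpleGraph V) (n : ℕ) : Prop :=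
  ∀ A B : Finset V, Disjoint A B → (∀ s ⊆ A, ¬ G.IsNClique (n - 1) s) →
    ∃ v, v ∉ A ∧ v ∉ B ∧ (∀ a ∈ A, G.Adj v a) ∧ (∀ b ∈ B, ¬ G.Adj v b)

lemma ext_one (hn : 3 ≤ n) (hx : ExtP G n) (ℓ : V) (W : Finset V) :
    ∃ y, y ∉ W ∧ y ≠ ℓ ∧ G.Adj y ℓ ∧ ∀ w ∈ W, w ≠ ℓ → ¬ G.Adj y w := by
  classical
  obtain ⟨v, hv1, hv2, hv3, hv4⟩ := hx {ℓ} (W.erase ℓ)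
    (by simp [Finset.disjoint_left])
    (by
      intro s hs hc
      have h1 : s.card ≤ 1 := le_trans (Finset.card_le_card hs) (by simp)
      have := hc.2
      omega)
  refine ⟨v, ?_, by simpa using hv1, hv3 ℓ (by simp), ?_⟩
  · intro hvW
    exact hv2 (Finset.mem_erase.2 ⟨by simpa using hv1, hvW⟩)
  · intro w hw hwl
    exact hv4 w (Finset.mem_erase.2 ⟨hwl, hw⟩)

lemma ext_two (hn : 3 ≤ n) (hx : ExtP G n) {y a : V} (hne : y ≠ a) (hya : ¬ G.Adj y a)
    (W : Finset V) :
    ∃ z, z ∉ W ∧ z ≠ y ∧ z ≠ a ∧ G.Adj z y ∧ G.Adj z a ∧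
      ∀ w ∈ W, w ≠ y → w ≠ a → ¬ G.Adj z w := by
  classical
  obtain ⟨v, hv1, hv2, hv3, hv4⟩ := hx {y, a} ((W.erase y).erase a)
    (by
      rw [Finset.disjoint_left]
      intro x hx1 hx2
      simp only [Finset.mem_insert, Finset.mem_singleton] at hx1
      rcases hx1 with rfl | rfl
      · exact (Finset.mem_erase.1 (Finset.mem_of_mem_erase hx2)).1 rfl
      · exact (Finset.mem_erase.1 hx2).1 rfl)
    (by
      intro s hs hc
      have hcard2 : ({y, a} : Finset V).card ≤ 2 := by
        apply le_trans (Finset.card_insert_le _ _); simp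
      have h1 : s.card ≤ 2 := le_trans (Finset.card_le_card hs) hcard2
      have h2 : s.card = n - 1 := hc.2
      have h3 : s.card = 2 := by omega
      have hseq : s = {y, a} := Finset.eq_of_subset_of_card_le hs (by
        rw [h3]; exact hcard2)
      have : G.Adj y a := hc.1 (by rw [hseq]; simp) (by rw [hseq]; simp) hne
      exact hya this)
  have hvy : v ≠ y := by intro h; exact hv1 (by simp [h])
  have hva : v ≠ a := by intro h; exact hv1 (by simp [h])
  refine ⟨v, ?_, hvy, hva, hv3 y (by simp), hv3 a (by simp), ?_⟩
  · intro hvW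
    exact hv2 (Finset.mem_erase.2 ⟨hva, Finset.mem_erase.2 ⟨hvy, hvW⟩⟩)
  · intro w hw hwy hwa
    exact hv4 w (Finset.mem_erase.2 ⟨hwa, Finset.mem_erase.2 ⟨hwy, hw⟩⟩)

lemma step_ray [DecidableEq V] (hn : 3 ≤ n) (hx : ExtP G n) :
    ∀ (ℓ : V) (W : Finset V) (a b : V), ∃ yz : V × V,
      yz.1 ∉ insert a (insert b (insert ℓ W)) ∧ G.Adj yz.1 ℓ ∧
      (∀ w ∈ insert a (insert b (insert ℓ W)), w ≠ ℓ → ¬ G.Adj yz.1 w) ∧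
      yz.2 ∉ insert a (insert b (insert ℓ W)) ∧ yz.2 ≠ yz.1 ∧ G.Adj yz.2 yz.1 ∧
      (∀ w ∈ insert a (insert b (insert ℓ W)), ¬ G.Adj yz.2 w) := by
  intro ℓ W a b
  set W' := insert a (insert b (insert ℓ W)) with hW'
  obtain ⟨y, hy1, hy2, hy3, hy4⟩ := ext_one hn hx ℓ W'
  obtain ⟨z, hz1, hz2, hz3, hz4⟩ := ext_one hn hx y (insert y W')
  refine ⟨(y, z), hy1, hy3, hy4, ?_, hz2, hz3, ?_⟩
  · intro h; exact hz1 (Finset.mem_insert_of_mem h)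
  · intro w hw
    exact hz4 w (Finset.mem_insert_of_mem hw) (fun h => hy1 (h ▸ hw))

lemma step_sep [DecidableEq V] (hn : 3 ≤ n) (hx : ExtP G n) :
    ∀ (ℓ : V) (W : Finset V) (a b : V), ∃ yz : V × V,
      yz.1 ∉ insert a (insert b (insert ℓ W)) ∧ G.Adj yz.1 ℓ ∧
      (∀ w ∈ insert a (insert b (insert ℓ W)), w ≠ ℓ → ¬ G.Adj yz.1 w) ∧
      yz.2 ∉ insert a (insert b (insert ℓ W)) ∧ yz.2 ≠ yz.1 ∧ G.Adj yz.2 yz.1 ∧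
      (∀ w ∈ insert a (insert b (insert ℓ W)), w ≠ a → ¬ G.Adj yz.2 w) ∧
      (a ≠ ℓ → G.Adj yz.2 a) := by
  intro ℓ W a b
  set W' := insert a (insert b (insert ℓ W)) with hW'
  obtain ⟨y, hy1, hy2, hy3, hy4⟩ := ext_one hn hx ℓ W'
  by_cases hal : a = ℓ
  · obtain ⟨z, hz1, hz2, hz3, hz4⟩ := ext_one hn hx y (insert y W')
    refine ⟨(y, z), hy1, hy3, hy4, ?_, hz2, hz3, ?_, fun h => absurd hal h⟩
    · intro h; exact hz1 (Finset.mem_insert_of_mem h)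
    · intro w hw _
      exact hz4 w (Finset.mem_insert_of_mem hw) (fun h => hy1 (h ▸ hw))
  · have haW : a ∈ W' := by simp [hW']
    have hya : ¬ G.Adj y a := hy4 a haW hal
    have hne : y ≠ a := fun h => hy1 (h ▸ haW)
    obtain ⟨z, hz1, hz2, hz3, hz4, hz5, hz6⟩ := ext_two hn hx hne hya (insert y W')
    refine ⟨(y, z), hy1, hy3, hy4, ?_, hz2, hz4, ?_, fun _ => hz5⟩
    · intro h; exact hz1 (Finset.mem_insert_of_mem h)
    · intro w hw hwa
      exact hz6 w (Finset.mem_insert_of_mem hw) (fun h => hy1 (h ▸ hw)) hwa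

/-- A finite partial isomorphism represented as a list of pairs. -/
def Good (G : SimpleGraph V) (p : List (V × V)) : Prop :=
  ∀ q ∈ p, ∀ r ∈ p, (q.1 = r.1 ↔ q.2 = r.2) ∧ (G.Adj q.1 r.1 ↔ G.Adj q.2 r.2)

lemma good_swap {p : List (V × V)} (h : Good G p) : Good G (p.map Prod.swap) := by
  intro q hq r hr
  simp only [List.mem_map] at hq hr
  obtain ⟨q', hq', rfl⟩ := hq
  obtain ⟨r', hr', rfl⟩ := hr
  exact ⟨(h q' hq' r' hr').1.symm, (h q' hq' r' hr').2.symm⟩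

lemma good_forth [Nonempty V] (hn : 3 ≤ n) (hfree : G.CliqueFree n) (hx : ExtP G n) :
    ∀ (p : List (V × V)) (a : V), ∃ b, Good G p → Good G ((a, b) :: p) := by
  classical
  intro p a
  by_cases hGp : Good G p
  swap
  · exact ⟨Classical.arbitrary V, fun h => absurd h hGp⟩
  by_cases hex : ∃ q ∈ p, q.1 = a
  · obtain ⟨q, hq, hq1⟩ := hex
    refine ⟨q.2, fun _ => ?_⟩
    intro r1 h1 r2 h2
    rcases List.mem_cons.1 h1 with rfl | h1 <;> rcases List.mem_cons.1 h2 with rfl | h2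
    · exact ⟨by simp, by simp⟩
    · have := hGp q hq r2 h2
      rw [hq1] at this; exact this
    · have := hGp r1 h1 q hq
      rw [hq1] at this; exact this
    · exact hGp r1 h1 r2 h2
  · push_neg at hex
    set A : Finset V := (p.toFinset.filter (fun q => G.Adj a q.1)).image Prod.snd with hA
    set B : Finset V := (p.toFinset.filter (fun q => ¬ G.Adj a q.1)).image Prod.snd with hB
    have hmemA : ∀ u, u ∈ A ↔ ∃ q ∈ p, q.2 = u ∧ G.Adj a q.1 := by
      intro u
      simp only [hA, Finset.mem_image, Finset.mem_filter, List.mem_toFinset]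
      constructor
      · rintro ⟨q, ⟨hq, hadj⟩, rfl⟩; exact ⟨q, hq, rfl, hadj⟩
      · rintro ⟨q, hq, rfl, hadj⟩; exact ⟨q, ⟨hq, hadj⟩, rfl⟩
    have hmemB : ∀ u, u ∈ B ↔ ∃ q ∈ p, q.2 = u ∧ ¬ G.Adj a q.1 := by
      intro u
      simp only [hB, Finset.mem_image, Finset.mem_filter, List.mem_toFinset]
      constructor
      · rintro ⟨q, ⟨hq, hadj⟩, rfl⟩; exact ⟨q, hq, rfl, hadj⟩
      · rintro ⟨q, hq, rfl, hadj⟩; exact ⟨q, ⟨hq, hadj⟩, rfl⟩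
    have hdisj : Disjoint A B := by
      rw [Finset.disjoint_left]
      intro u huA huB
      obtain ⟨q1, hq1, hq1e, hq1adj⟩ := (hmemA u).1 huA
      obtain ⟨q2, hq2, hq2e, hq2adj⟩ := (hmemB u).1 huB
      have := (hGp q1 hq1 q2 hq2).1.2 (hq1e.trans hq2e.symm)
      exact hq2adj (this ▸ hq1adj)
    have hcliq : ∀ s ⊆ A, ¬ G.IsNClique (n - 1) s := by
      intro s hs hcl
      set invf : V → V := fun u =>
        if h : ∃ q, q ∈ p ∧ q.2 = u ∧ G.Adj a q.1 then (Classical.choose h).1 else u with hinvf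
      have key : ∀ u ∈ s, ∃ q ∈ p, q.2 = u ∧ q.1 = invf u ∧ G.Adj a q.1 := by
        intro u hu
        obtain ⟨q, hq, hqe, hqadj⟩ := (hmemA u).1 (hs hu)
        have h : ∃ q, q ∈ p ∧ q.2 = u ∧ G.Adj a q.1 := ⟨q, hq, hqe, hqadj⟩
        obtain ⟨hc1, hc2, hc3⟩ := Classical.choose_spec h
        have hqi : invf u = (Classical.choose h).1 := dif_pos h
        exact ⟨Classical.choose h, hc1, hc2, hqi.symm, hc3⟩
      have hinj : Set.InjOn invf s := by
        intro u1 hu1 u2 hu2 he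
        obtain ⟨q1, hq1, hq1e, hq1i, _⟩ := key u1 hu1
        obtain ⟨q2, hq2, hq2e, hq2i, _⟩ := key u2 hu2
        have : q1.1 = q2.1 := by rw [hq1i, hq2i, he]
        have := (hGp q1 hq1 q2 hq2).1.1 this
        rw [← hq1e, ← hq2e, this]
      set t : Finset V := s.image invf with ht
      have hcard : t.card = n - 1 := by
        rw [ht, Finset.card_image_of_injOn hinj, hcl.2]
      have hanot : a ∉ t := by
        intro hat
        obtain ⟨u, hu, hue⟩ := Finset.mem_image.1 hat
        obtain ⟨q, hq, hqe, hqi, hqadj⟩ := key u hu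
        rw [hqi, hue] at hqadj
        exact G.irrefl hqadj
      have : G.IsNClique n (insert a t) := by
        constructor
        · intro u1 hu1 u2 hu2 hne
          simp only [Finset.coe_insert, Set.mem_insert_iff, Finset.mem_coe] at hu1 hu2
          have adj_at : ∀ u ∈ t, G.Adj a u := by
            intro u hut
            obtain ⟨w, hw, hwe⟩ := Finset.mem_image.1 hut
            obtain ⟨q, hq, hqe, hqi, hqadj⟩ := key w hw
            rw [← hwe, ← hqi]; exact hqadj
          rcases hu1 with rfl | hu1 <;> rcases hu2 with rfl | hu2
          · exact absurd rfl hne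
          · exact adj_at u2 hu2
          · exact (adj_at u1 hu1).symm
          · obtain ⟨w1, hw1, hw1e⟩ := Finset.mem_image.1 hu1
            obtain ⟨w2, hw2, hw2e⟩ := Finset.mem_image.1 hu2
            obtain ⟨q1, hq1, hq1e, hq1i, _⟩ := key w1 hw1
            obtain ⟨q2, hq2, hq2e, hq2i, _⟩ := key w2 hw2
            have hwne : w1 ≠ w2 := by
              intro h; rw [h] at hw1e; exact hne (hw1e.symm.trans hw2e)
            have hadjw : G.Adj w1 w2 :=
              hcl.1 (by exact_mod_cast hw1) (by exact_mod_cast hw2) hwne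
            have : G.Adj q1.2 q2.2 := by rw [hq1e, hq2e]; exact hadjw
            have := (hGp q1 hq1 q2 hq2).2.2 this
            rw [hq1i, hq2i, hw1e, hw2e] at this
            exact this
        · rw [Finset.card_insert_of_notMem hanot, hcard]; omega
      exact hfree _ this
    obtain ⟨b, hbA, hbB, hbadjA, hbadjB⟩ := hx A B hdisj hcliq
    have hbr : ∀ r ∈ p, b ≠ r.2 ∧ (G.Adj a r.1 ↔ G.Adj b r.2) := by
      intro r hr
      by_cases hadj : G.Adj a r.1
      · have hrA : r.2 ∈ A := (hmemA r.2).2 ⟨r, hr, rfl, hadj⟩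
        exact ⟨fun h => hbA (h ▸ hrA), iff_of_true hadj (hbadjA r.2 hrA)⟩
      · have hrB : r.2 ∈ B := (hmemB r.2).2 ⟨r, hr, rfl, hadj⟩
        exact ⟨fun h => hbB (h ▸ hrB), iff_of_false hadj (hbadjB r.2 hrB)⟩
    refine ⟨b, fun _ => ?_⟩
    intro r1 h1 r2 h2
    rcases List.mem_cons.1 h1 with rfl | h1 <;> rcases List.mem_cons.1 h2 with rfl | h2
    · exact ⟨by simp, by simp⟩
    · exact ⟨iff_of_false (fun h => hex r2 h2 h.symm) (hbr r2 h2).1, (hbr r2 h2).2⟩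
    · refine ⟨iff_of_false (hex r1 h1) (fun h => (hbr r1 h1).1 h.symm), ?_⟩
      rw [G.adj_comm r1.1 a, G.adj_comm r1.2 b]
      exact (hbr r1 h1).2
    · exact hGp r1 h1 r2 h2

lemma list_swap_swap (p : List (V × V)) : (p.map Prod.swap).map Prod.swap = p := by
  simp [List.map_map, Prod.swap_swap_eq]

lemma part2 [Countable V] [Infinite V] (hn : 3 ≤ n)
    (hfree : G.CliqueFree n) (hx : ExtP G n) :
    ∃ g : G ≃g G, ∃ v, g v ≠ v := by
  classical
  obtain ⟨e⟩ : Nonempty (ℕ ≃ V) := nonempty_equiv_of_countable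
  have : Nonempty V := ⟨e 0⟩
  choose F hF using good_forth hn hfree hx
  set u := e 0 with hu
  set v := e 1 with hv
  have huv : u ≠ v := fun h => by simpa using e.injective h
  set p0 : List (V × V) := [(u, v), (v, u)] with hp0def
  have hp0 : Good G p0 := by
    intro q hq r hr
    simp only [hp0def, List.mem_cons, List.mem_singleton, List.not_mem_nil, or_false] at hq hr
    rcases hq with rfl | rfl <;> rcases hr with rfl | rfl
    · exact ⟨by simp, by simp⟩
    · exact ⟨eq_comm, G.adj_comm _ _⟩
    · exact ⟨eq_comm, G.adj_comm _ _⟩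
    · exact ⟨by simp, by simp⟩
  set q : ℕ → List (V × V) := fun k => Nat.rec p0
    (fun k p => (F (((e k, F p (e k)) :: p).map Prod.swap) (e k), e k) ::
      (e k, F p (e k)) :: p) k with hqdef
  have hqs : ∀ k, q (k + 1) = (F (((e k, F (q k) (e k)) :: q k).map Prod.swap) (e k), e k) ::
      (e k, F (q k) (e k)) :: q k := fun k => rfl
  have hgood : ∀ k, Good G (q k) := by
    intro k
    induction k with
    | zero => exact hp0
    | succ k ih =>
      rw [hqs]
      have h1 : Good G ((e k, F (q k) (e k)) :: q k) := hF _ _ ih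
      have h2 := hF (((e k, F (q k) (e k)) :: q k).map Prod.swap) (e k) (good_swap h1)
      have h3 := good_swap h2
      rw [List.map_cons, list_swap_swap] at h3
      exact h3
  have hmono : ∀ k m, k ≤ m → ∀ r ∈ q k, r ∈ q m := by
    intro k m hkm
    induction m, hkm using Nat.le_induction with
    | base => exact fun r hr => hr
    | succ m hm ih =>
      intro r hr
      rw [hqs]
      exact List.mem_cons_of_mem _ (List.mem_cons_of_mem _ (ih r hr))
  have hfun1 : ∀ (a b b' : V) (k m : ℕ), (a, b) ∈ q k → (a, b') ∈ q m → b = b' := by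
    intro a b b' k m h1 h2
    have h1' := hmono k (max k m) (le_max_left _ _) _ h1
    have h2' := hmono m (max k m) (le_max_right _ _) _ h2
    exact (hgood (max k m) (a, b) h1' (a, b') h2').1.1 rfl
  have hfun2 : ∀ (a a' b : V) (k m : ℕ), (a, b) ∈ q k → (a', b) ∈ q m → a = a' := by
    intro a a' b k m h1 h2
    have h1' := hmono k (max k m) (le_max_left _ _) _ h1
    have h2' := hmono m (max k m) (le_max_right _ _) _ h2
    exact (hgood (max k m) (a, b) h1' (a', b) h2').1.2 rfl
  set f : V → V := fun a => F (q (e.symm a)) a with hfdef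
  have hf : ∀ a, (a, f a) ∈ q (e.symm a + 1) := by
    intro a
    rw [hqs (e.symm a), hfdef]
    simp only [Equiv.apply_symm_apply]
    exact List.mem_cons_of_mem _ (List.mem_cons_self)
  have htot2 : ∀ a, ∃ c, (c, a) ∈ q (e.symm a + 1) := by
    intro a
    refine ⟨F (((e (e.symm a), F (q (e.symm a)) (e (e.symm a))) :: q (e.symm a)).map Prod.swap)
      (e (e.symm a)), ?_⟩
    rw [hqs (e.symm a)]
    simp only [Equiv.apply_symm_apply]
    exact List.mem_cons_self
  choose finv hfinv using htot2
  have hrl : ∀ a, finv (f a) = a := by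
    intro a
    exact hfun2 (finv (f a)) a (f a) (e.symm (f a) + 1) (e.symm a + 1) (hfinv (f a)) (hf a)
  have hlr : ∀ a, f (finv a) = a := by
    intro a
    exact hfun1 (finv a) (f (finv a)) a (e.symm (finv a) + 1) (e.symm a + 1) (hf (finv a)) (hfinv a)
  have hadj : ∀ a b, G.Adj (f a) (f b) ↔ G.Adj a b := by
    intro a b
    set M := max (e.symm a + 1) (e.symm b + 1) with hM
    have h1 := hmono _ M (le_max_left _ _) _ (hf a)
    have h2 := hmono _ M (le_max_right _ _) _ (hf b)
    exact ((hgood M (a, f a) h1 (b, f b) h2).2).symm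
  have hfu : f u = v := by
    have h0 : (u, v) ∈ q 0 := List.mem_cons_self
    have t1 := hfun1 u (f u) v (e.symm u + 1) 0
    exact t1 (hf u) h0
  exact ⟨⟨⟨f, finv, hrl, hlr⟩, hadj _ _⟩, u, by simp only [RelIso.coe_fn_mk, Equiv.coe_fn_mk]; rw [hfu]; exact huv.symm⟩

lemma part1 [Countable V] [Infinite V] (hn : 3 ≤ n) (hx : ExtP G n) :
    ∃ c : V → Bool, ∀ g : G ≃g G, (∀ v, c (g v) = c v) → ∀ v, g v = v := by
  classical
  obtain ⟨e⟩ : Nonempty (ℕ ≃ V) := nonempty_equiv_of_countable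
  choose F1 hF1 using step_ray (G := G) hn hx
  choose F2 hF2 using step_sep (G := G) hn hx
  set av : ℕ → V := fun k => e (Nat.unpair k).1 with havdef
  set bv : ℕ → V := fun k => e (Nat.unpair k).2 with hbvdef
  set U : ℕ → Finset V := fun k => (Finset.range k).biUnion (fun j => {av j, bv j}) with hUdef
  set st : ℕ → List V := fun k => Nat.rec [e 0] (fun k xs =>
    ((if av k ∈ xs ∨ bv k ∈ xs ∨ av k = bv k
        then F1 (xs.headD (e 0)) (xs.toFinset ∪ U (k + 1)) (av k) (bv k)
        else F2 (xs.headD (e 0)) (xs.toFinset ∪ U (k + 1)) (av k) (bv k)).2 ::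
     (if av k ∈ xs ∨ bv k ∈ xs ∨ av k = bv k
        then F1 (xs.headD (e 0)) (xs.toFinset ∪ U (k + 1)) (av k) (bv k)
        else F2 (xs.headD (e 0)) (xs.toFinset ∪ U (k + 1)) (av k) (bv k)).1 :: xs)) k
    with hstdef
  set P : ℕ → V × V := fun k =>
    if av k ∈ st k ∨ bv k ∈ st k ∨ av k = bv k
      then F1 ((st k).headD (e 0)) ((st k).toFinset ∪ U (k + 1)) (av k) (bv k)
      else F2 ((st k).headD (e 0)) ((st k).toFinset ∪ U (k + 1)) (av k) (bv k) with hPdef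
  have hcons : ∀ k, st (k + 1) = (P k).2 :: (P k).1 :: st k := fun k => rfl
  set W' : ℕ → Finset V := fun k =>
    insert (av k) (insert (bv k) (insert ((st k).headD (e 0))
      ((st k).toFinset ∪ U (k + 1)))) with hW'def
  have hspec : ∀ k,
      (P k).1 ∉ W' k ∧ G.Adj (P k).1 ((st k).headD (e 0)) ∧
      (∀ w ∈ W' k, w ≠ (st k).headD (e 0) → ¬ G.Adj (P k).1 w) ∧
      (P k).2 ∉ W' k ∧ (P k).2 ≠ (P k).1 ∧ G.Adj (P k).2 (P k).1 ∧
      (∀ w ∈ W' k, w ≠ av k → ¬ G.Adj (P k).2 w) ∧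
      ((av k ∈ st k ∨ bv k ∈ st k ∨ av k = bv k) → ∀ w ∈ W' k, ¬ G.Adj (P k).2 w) ∧
      (¬(av k ∈ st k ∨ bv k ∈ st k ∨ av k = bv k) → av k ≠ (st k).headD (e 0) →
        G.Adj (P k).2 (av k)) := by
    intro k
    by_cases h : av k ∈ st k ∨ bv k ∈ st k ∨ av k = bv k
    · have hPk : P k = F1 ((st k).headD (e 0)) ((st k).toFinset ∪ U (k + 1)) (av k) (bv k) := by
        simp only [hPdef]; rw [if_pos h]
      obtain ⟨s1, s2, s3, s4, s5, s6, s7⟩ :=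
        hF1 ((st k).headD (e 0)) ((st k).toFinset ∪ U (k + 1)) (av k) (bv k)
      rw [hW'def, hPk]
      exact ⟨s1, s2, s3, s4, s5, s6, fun w hw _ => s7 w hw, fun _ => s7, fun hc => absurd h hc⟩
    · have hPk : P k = F2 ((st k).headD (e 0)) ((st k).toFinset ∪ U (k + 1)) (av k) (bv k) := by
        simp only [hPdef]; rw [if_neg h]
      obtain ⟨s1, s2, s3, s4, s5, s6, s7, s8⟩ :=
        hF2 ((st k).headD (e 0)) ((st k).toFinset ∪ U (k + 1)) (av k) (bv k)
      rw [hW'def, hPk]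
      exact ⟨s1, s2, s3, s4, s5, s6, s7, fun hc => absurd hc h, fun _ => s8⟩
  have hlen : ∀ k, (st k).length = 2 * k + 1 := by
    intro k
    induction k with
    | zero => rfl
    | succ k ih => rw [hcons k]; simp only [List.length_cons, ih]; omega
  have hpre : ∀ k m, k ≤ m → (st k).reverse <+: (st m).reverse := by
    intro k m hkm
    induction m, hkm using Nat.le_induction with
    | base => exact List.prefix_refl _
    | succ m hm ih =>
      refine ih.trans ?_
      rw [hcons m, List.reverse_cons, List.reverse_cons]
      exact (List.prefix_append _ _).trans (List.prefix_append _ _)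
  set x : ℕ → V := fun i => (st i).reverse.getD i (e 0) with hxdef
  have hget : ∀ k i, i ≤ 2 * k → (st k).reverse.getD i (e 0) = x i := by
    intro k i hi
    simp only [hxdef]
    rcases le_total i k with h | h
    · have hp := hpre i k h
      have h1 : i < (st i).reverse.length := by rw [List.length_reverse, hlen]; omega
      have h2 : i < (st k).reverse.length := by rw [List.length_reverse, hlen]; omega
      rw [List.getD_eq_getElem _ _ h2, List.getD_eq_getElem _ _ h1]
      exact (hp.getElem h1).symm
    · have hp := hpre k i h
      have h1 : i < (st i).reverse.length := by rw [List.length_reverse, hlen]; omega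
      have h2 : i < (st k).reverse.length := by rw [List.length_reverse, hlen]; omega
      rw [List.getD_eq_getElem _ _ h2, List.getD_eq_getElem _ _ h1]
      exact hp.getElem h2
  have hy : ∀ k, x (2 * k + 1) = (P k).1 := by
    intro k
    have h0 : x (2 * k + 1) = (st (k + 1)).reverse.getD (2 * k + 1) (e 0) :=
      (hget (k + 1) (2 * k + 1) (by omega)).symm
    rw [h0, hcons k, List.reverse_cons, List.reverse_cons]
    have h2 : 2 * k + 1 < ((((st k).reverse ++ [(P k).1]) ++ [(P k).2])).length := by
      simp only [List.length_append, List.length_reverse, hlen, List.length_cons,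
        List.length_nil]
      omega
    rw [List.getD_eq_getElem _ _ h2]
    have h3 : 2 * k + 1 < ((st k).reverse ++ [(P k).1]).length := by
      simp only [List.length_append, List.length_reverse, hlen, List.length_cons,
        List.length_nil]
      omega
    rw [List.getElem_append_left h3]
    exact List.getElem_concat_length (by rw [List.length_reverse, hlen]) _
  have hz : ∀ k, x (2 * k + 2) = (P k).2 := by
    intro k
    have h0 : x (2 * k + 2) = (st (k + 1)).reverse.getD (2 * k + 2) (e 0) :=
      (hget (k + 1) (2 * k + 2) (by omega)).symm
    rw [h0, hcons k, List.reverse_cons, List.reverse_cons]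
    have h2 : 2 * k + 2 < ((((st k).reverse ++ [(P k).1]) ++ [(P k).2])).length := by
      simp only [List.length_append, List.length_reverse, hlen, List.length_cons,
        List.length_nil]
      omega
    rw [List.getD_eq_getElem _ _ h2]
    exact List.getElem_concat_length
      (by simp only [List.length_append, List.length_reverse, hlen, List.length_cons,
        List.length_nil] <;> omega) _
  have hhead : ∀ k, (st k).headD (e 0) = x (2 * k) := by
    intro k
    cases k with
    | zero => rfl
    | succ k =>
      rw [hcons k, List.headD_cons]
      have h1 : 2 * (k + 1) = 2 * k + 2 := by ring
      rw [h1, hz k]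
  have hmem1 : ∀ k i, i ≤ 2 * k → x i ∈ st k := by
    intro k i hi
    rw [← List.mem_reverse, ← hget k i hi]
    have h2 : i < (st k).reverse.length := by rw [List.length_reverse, hlen]; omega
    rw [List.getD_eq_getElem _ _ h2]
    exact List.getElem_mem _
  have hmem2 : ∀ k w, w ∈ st k → ∃ i ≤ 2 * k, x i = w := by
    intro k w hw
    rw [← List.mem_reverse] at hw
    obtain ⟨i, hilt, hie⟩ := List.mem_iff_getElem.1 hw
    have hle : i ≤ 2 * k := by
      have := hilt; rw [List.length_reverse, hlen] at this; omega
    exact ⟨i, hle, by rw [← hget k i hle, List.getD_eq_getElem _ _ hilt]; exact hie⟩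
  have hWst : ∀ k w, w ∈ st k → w ∈ W' k := by
    intro k w hw
    simp only [hW'def]
    exact Finset.mem_insert_of_mem (Finset.mem_insert_of_mem (Finset.mem_insert_of_mem
      (Finset.mem_union_left _ (List.mem_toFinset.2 hw))))
  have hWb : ∀ k, bv k ∈ W' k := by
    intro k
    simp only [hW'def]
    exact Finset.mem_insert_of_mem (Finset.mem_insert_self _ _)
  have hadjsucc : ∀ i, G.Adj (x (i + 1)) (x i) := by
    intro i
    rcases Nat.even_or_odd i with ⟨k, hk⟩ | ⟨k, hk⟩
    · have h1 : i + 1 = 2 * k + 1 := by omega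
      have h2 : i = 2 * k := by omega
      rw [h1, h2, hy k, ← hhead k]
      exact (hspec k).2.1
    · have h1 : i + 1 = 2 * k + 2 := by omega
      rw [h1, hk, hz k]
      have h6 := (hspec k).2.2.2.2.2.1
      rw [← hy k] at h6
      exact h6
  have hinj : ∀ i j, i < j → x j ≠ x i := by
    intro i j hij
    obtain ⟨m, rfl⟩ : ∃ m, j = m + 1 := ⟨j - 1, by omega⟩
    rcases Nat.even_or_odd m with ⟨k, hk⟩ | ⟨k, hk⟩
    · have hj : m + 1 = 2 * k + 1 := by omega
      rw [hj, hy k]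
      intro heq
      apply (hspec k).1
      rw [heq]
      exact hWst k (x i) (hmem1 k i (by omega))
    · have hj : m + 1 = 2 * k + 2 := by omega
      rw [hj, hz k]
      by_cases hi1 : i = 2 * k + 1
      · rw [hi1, hy k]; exact (hspec k).2.2.2.2.1
      · intro heq
        apply (hspec k).2.2.2.1
        rw [heq]
        exact hWst k (x i) (hmem1 k i (by omega))
  have hnonadj : ∀ i j, j + 2 ≤ i → ¬ G.Adj (x i) (x j) := by
    intro i j hji
    obtain ⟨m, rfl⟩ : ∃ m, i = m + 1 := ⟨i - 1, by omega⟩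
    rcases Nat.even_or_odd m with ⟨k, hk⟩ | ⟨k, hk⟩
    · have hj : j ≤ 2 * k := by omega
      have hjne : x j ≠ (st k).headD (e 0) := by
        rw [hhead k]
        intro h
        exact hinj j (2 * k) (by omega) h.symm
      have hres := (hspec k).2.2.1 (x j) (hWst k _ (hmem1 k j hj)) hjne
      rw [show m + 1 = 2 * k + 1 by omega, hy k]
      exact hres
    · have hj : j ≤ 2 * k := by omega
      rw [show m + 1 = 2 * k + 2 by omega, hz k]
      by_cases hcnd : av k ∈ st k ∨ bv k ∈ st k ∨ av k = bv k
      · exact (hspec k).2.2.2.2.2.2.2.1 hcnd (x j) (hWst k _ (hmem1 k j hj))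
      · refine (hspec k).2.2.2.2.2.2.1 (x j) (hWst k _ (hmem1 k j hj)) ?_
        intro h
        exact hcnd (Or.inl (h ▸ hmem1 k j hj))
  have hsep : ∀ p q : V, (∀ i, x i ≠ p) → (∀ i, x i ≠ q) → p ≠ q →
      ∃ j, G.Adj (x j) p ∧ ¬ G.Adj (x j) q := by
    intro p q hp hq hpq
    set k := Nat.pair (e.symm p) (e.symm q) with hk
    have hak : av k = p := by
      simp only [havdef, hk, Nat.unpair_pair, Equiv.apply_symm_apply]
    have hbk : bv k = q := by
      simp only [hbvdef, hk, Nat.unpair_pair, Equiv.apply_symm_apply]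
    have hcnd : ¬(av k ∈ st k ∨ bv k ∈ st k ∨ av k = bv k) := by
      rintro (h | h | h)
      · obtain ⟨i, _, hi⟩ := hmem2 k _ h
        exact hp i (by rw [hi, hak])
      · obtain ⟨i, _, hi⟩ := hmem2 k _ h
        exact hq i (by rw [hi, hbk])
      · exact hpq (hak ▸ hbk ▸ h)
    refine ⟨2 * k + 2, ?_, ?_⟩
    · rw [hz k, ← hak]
      refine (hspec k).2.2.2.2.2.2.2.2 hcnd ?_
      rw [hak, hhead k]
      exact fun h => hp (2 * k) h.symm
    · rw [hz k, ← hbk]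
      refine (hspec k).2.2.2.2.2.2.1 (bv k) (hWb k) ?_
      rw [hak, hbk]
      exact fun h => hpq h.symm
  -- the coloring
  set X : Set V := Set.range x with hXdef
  set c : V → Bool := fun w => if w ∈ X then true else false with hcdef
  have hciff : ∀ w, c w = true ↔ w ∈ X := by
    intro w
    by_cases h : w ∈ X <;> simp [hcdef, h]
  refine ⟨c, ?_⟩
  intro g hg
  have hgX : ∀ w, w ∈ X ↔ g w ∈ X := by
    intro w
    rw [← hciff w, ← hciff (g w), hg w]
  have hgX' : ∀ w, w ∈ X ↔ g.symm w ∈ X := by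
    intro w
    have h1 := hgX (g.symm w)
    rw [g.apply_symm_apply] at h1
    exact h1.symm
  have hadj_iff : ∀ i j, G.Adj (x i) (x j) ↔ (i = j + 1 ∨ j = i + 1) := by
    intro i j
    constructor
    · intro h
      by_contra hc
      push_neg at hc
      rcases lt_trichotomy i j with hlt | rfl | hlt
      · exact hnonadj j i (by omega) h.symm
      · exact G.irrefl h
      · exact hnonadj i j (by omega) h
    · rintro (rfl | rfl)
      · exact hadjsucc j
      · exact (hadjsucc i).symm
  have himg : ∀ i, ∃ m, g (x i) = x m := by
    intro i
    have h1 : g (x i) ∈ X := (hgX (x i)).1 ⟨i, rfl⟩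
    obtain ⟨m, hm⟩ := h1
    exact ⟨m, hm.symm⟩
  have hfix0 : g (x 0) = x 0 := by
    obtain ⟨m, hm⟩ := himg 0
    rcases Nat.eq_zero_or_pos m with rfl | hpos
    · exact hm
    · exfalso
      have key : ∀ t, G.Adj (x t) (x m) → g.symm (x t) = x 1 := by
        intro t hadj
        have h1 : g.symm (x t) ∈ X := (hgX' (x t)).1 ⟨t, rfl⟩
        obtain ⟨s, hs⟩ := h1
        have hadj2 : G.Adj (g.symm (x t)) (x 0) := by
          rw [← SimpleGraph.Iso.map_adj_iff g, g.apply_symm_apply, hm]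
          exact hadj
        rw [← hs] at hadj2
        have hs1 : s = 1 := by
          have := (hadj_iff s 0).1 hadj2
          omega
        rw [← hs, hs1]
      have k1 := key (m + 1) ((hadj_iff (m + 1) m).2 (Or.inl rfl))
      have k2 := key (m - 1) ((hadj_iff (m - 1) m).2 (Or.inr (by omega)))
      have h12 : g.symm (x (m + 1)) = g.symm (x (m - 1)) := k1.trans k2.symm
      have heq : x (m + 1) = x (m - 1) := by
        calc x (m + 1) = g (g.symm (x (m + 1))) := (g.apply_symm_apply _).symm
          _ = g (g.symm (x (m - 1))) := by rw [h12]
          _ = x (m - 1) := g.apply_symm_apply _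
      exact hinj (m - 1) (m + 1) (by omega) heq
  have hfixall : ∀ i, g (x i) = x i ∧ g (x (i + 1)) = x (i + 1) := by
    intro i
    induction i with
    | zero =>
      refine ⟨hfix0, ?_⟩
      obtain ⟨m, hm⟩ := himg 1
      have hadj : G.Adj (g (x 1)) (g (x 0)) := (SimpleGraph.Iso.map_adj_iff g).2 (hadjsucc 0)
      rw [hm, hfix0] at hadj
      have hm1 : m = 1 := by
        have := (hadj_iff m 0).1 hadj
        omega
      show g (x 1) = x 1
      rw [hm, hm1]
    | succ i ih =>
      refine ⟨ih.2, ?_⟩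
      obtain ⟨m, hm⟩ := himg (i + 2)
      have hadj : G.Adj (g (x (i + 2))) (g (x (i + 1))) :=
        (SimpleGraph.Iso.map_adj_iff g).2 (hadjsucc (i + 1))
      rw [hm, ih.2] at hadj
      rcases (hadj_iff m (i + 1)).1 hadj with h | h
      · rw [hm, h]
      · exfalso
        have hmi : m = i := by omega
        have heq : g (x (i + 2)) = g (x i) := by rw [hm, hmi, ih.1]
        have := g.injective heq
        exact hinj i (i + 2) (by omega) this
  intro v
  by_cases hv : v ∈ X
  · obtain ⟨i, hi⟩ := hv
    rw [← hi]
    exact (hfixall i).1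
  · by_contra hne
    have hgv : g v ∉ X := fun h => hv ((hgX v).2 h)
    have h1 : ∀ i, x i ≠ v := fun i h => hv ⟨i, h⟩
    have h2 : ∀ i, x i ≠ g v := fun i h => hgv ⟨i, h⟩
    obtain ⟨j, hj1, hj2⟩ := hsep v (g v) h1 h2 (fun h => hne h.symm)
    apply hj2
    have hadj : G.Adj (g (x j)) (g v) := (SimpleGraph.Iso.map_adj_iff g).2 hj1
    rwa [(hfixall j).1] at hadj

end HensonAux

/-- For `n ≥ 3`, a countably infinite `Kₙ`-free graph with the extension
property for `Kₙ`-free graphs (the generic `Kₙ`-free homogeneous graph) has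
distinguishing number 2. -/
theorem generic_Kn_free_graph_distinguishing_number_two
    (n : ℕ) (hn : 3 ≤ n) (V : Type*) [Countable V] [Infinite V]
    (G : SimpleGraph V) (hfree : G.CliqueFree n)
    (hext : ∀ A B : Finset V, Disjoint A B → (∀ s ⊆ A, ¬ G.IsNClique (n - 1) s) →
      ∃ v, v ∉ A ∧ v ∉ B ∧ (∀ a ∈ A, G.Adj v a) ∧ (∀ b ∈ B, ¬ G.Adj v b)) :
    (∃ c : V → Bool, ∀ g : G ≃g G, (∀ v, c (g v) = c v) → ∀ v, g v = v) ∧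
    (∃ g : G ≃g G, ∃ v, g v ≠ v) := by
  exact ⟨part1 hn hext, part2 hn hfree hext⟩
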